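/- Let (B_t)_{t≥0} be a standard one-dimensional Brownian motion. Then for every real λ ≥ 1, P(sup_{t ∈ [0,1]} |B_t| ≥ λ) ≤ P(sup_{t ∈ [0,1]} |B_t| ≥ 1)^{⌊λ⌋}. -/

import Mathlib

open MeasureTheory ProbabilityTheory Filter Set Real
open scoped NNReal ENNReal

noncomputable section

namespace BrownianAux


/-! ### Taylor lower bounds for exp -/

lemma exp_taylor12 (x : ℝ) (hx : 0 ≤ x) :
    1 + x + x^2/2 + x^3/6 + x^4/24 + x^5/120 + x^6/720 + x^7/5040 + x^8/40320
      + x^9/362880 + x^10/3628800 + x^11/39916800 ≤ Real.exp x := by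
  have h := Real.sum_le_exp_of_nonneg hx 12
  refine le_trans (le_of_eq ?_) h
  rw [Finset.sum_range_succ, Finset.sum_range_succ, Finset.sum_range_succ,
    Finset.sum_range_succ, Finset.sum_range_succ, Finset.sum_range_succ,
    Finset.sum_range_succ, Finset.sum_range_succ, Finset.sum_range_succ,
    Finset.sum_range_succ, Finset.sum_range_succ, Finset.sum_range_succ,
    Finset.sum_range_zero]
  norm_num [Nat.factorial]

lemma exp_neg_le {a b : ℝ} (ha : 0 ≤ a) (hb : 0 < b)
    (h : 1 ≤ b * (1 + a + a^2/2 + a^3/6 + a^4/24 + a^5/120 + a^6/720 + a^7/5040 + a^8/40320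
      + a^9/362880 + a^10/3628800 + a^11/39916800)) :
    Real.exp (-a) ≤ b := by
  set T := 1 + a + a^2/2 + a^3/6 + a^4/24 + a^5/120 + a^6/720 + a^7/5040 + a^8/40320
      + a^9/362880 + a^10/3628800 + a^11/39916800 with hT
  have hT0 : (0:ℝ) < T := by rw [hT]; positivity
  have h2 : 1/b ≤ Real.exp a := by
    calc 1/b ≤ T := by rw [div_le_iff₀ hb]; linarith
    _ ≤ Real.exp a := exp_taylor12 a ha
  rw [Real.exp_neg, inv_le_comm₀ (Real.exp_pos a) hb]
  calc b⁻¹ = 1/b := (one_div b).symm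
  _ ≤ Real.exp a := h2

/-! ### sqrt(2 pi) bounds -/

lemma sqrt_two_pi_ge : (2.5066 : ℝ) ≤ Real.sqrt (2*Real.pi) := by
  rw [show (2.5066:ℝ) = Real.sqrt (2.5066^2) by rw [Real.sqrt_sq]; norm_num]
  apply Real.sqrt_le_sqrt
  nlinarith [Real.pi_gt_d6]

lemma sqrt_two_pi_pos : (0:ℝ) < Real.sqrt (2*Real.pi) := by linarith [sqrt_two_pi_ge]

lemma inv_sqrt_two_pi_le : (Real.sqrt (2*Real.pi))⁻¹ ≤ 0.39895 := by
  have h := sqrt_two_pi_ge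
  calc (Real.sqrt (2*Real.pi))⁻¹ ≤ (2.5066:ℝ)⁻¹ := by
        apply inv_anti₀ (by norm_num) h
  _ ≤ 0.39895 := by norm_num

lemma pdf_eq : gaussianPDFReal 0 1 = fun x => (Real.sqrt (2*Real.pi))⁻¹ * Real.exp (-(x^2)/2) := by
  funext x
  simp [gaussianPDFReal]

lemma pdf_le (x E : ℝ) (hE : Real.exp (-(x^2)/2) ≤ E) (hE0 : 0 ≤ E) :
    gaussianPDFReal 0 1 x ≤ 0.39895 * E := by
  rw [pdf_eq]
  have h1 := inv_sqrt_two_pi_le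
  have h2 : (0:ℝ) ≤ (Real.sqrt (2*Real.pi))⁻¹ := by positivity
  have h3 : (0:ℝ) < Real.exp (-(x^2)/2) := Real.exp_pos _
  nlinarith

/-! ### the degree-10 alternating polynomial dominates exp(-t) -/

def P10e (t : ℝ) : ℝ := 1 - t + t^2/2 - t^3/6 + t^4/24 - t^5/120 + t^6/720 - t^7/5040
  + t^8/40320 - t^9/362880 + t^10/3628800

lemma hasDerivAt_P10e (t : ℝ) : HasDerivAt P10e
    (-1 + t - t^2/2 + t^3/6 - t^4/24 + t^5/120 - t^6/720 + t^7/5040 - t^8/40320 + t^9/362880) t := by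
  have h := ((((((((((hasDerivAt_const t (1:ℝ)).sub (hasDerivAt_id t)).add
    ((hasDerivAt_pow 2 t).div_const 2)).sub ((hasDerivAt_pow 3 t).div_const 6)).add
    ((hasDerivAt_pow 4 t).div_const 24)).sub ((hasDerivAt_pow 5 t).div_const 120)).add
    ((hasDerivAt_pow 6 t).div_const 720)).sub ((hasDerivAt_pow 7 t).div_const 5040)).add
    ((hasDerivAt_pow 8 t).div_const 40320)).sub ((hasDerivAt_pow 9 t).div_const 362880)).add
    ((hasDerivAt_pow 10 t).div_const 3628800)
  refine HasDerivAt.congr_deriv h ?_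
  push_cast
  norm_num
  ring

lemma exp_le_P10e {t : ℝ} (ht : 0 ≤ t) : Real.exp (-t) ≤ P10e t := by
  have hF : ∀ x : ℝ, HasDerivAt (fun u => Real.exp u * P10e u)
      (Real.exp x * (x^10/3628800)) x := by
    intro x
    have h := (Real.hasDerivAt_exp x).mul (hasDerivAt_P10e x)
    refine HasDerivAt.congr_deriv h ?_
    unfold P10e
    ring
  have hmono : MonotoneOn (fun u => Real.exp u * P10e u) (Ici (0:ℝ)) := by
    apply monotoneOn_of_deriv_nonneg (convex_Ici 0)
    · exact (Real.continuous_exp.mul (by unfold P10e; continuity)).continuousOn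
    · intro x _
      exact (hF x).differentiableAt.differentiableWithinAt
    · intro x hx
      rw [(hF x).deriv]
      have hx0 : (0:ℝ) < x := by
        rw [interior_Ici] at hx
        exact hx
      positivity
  have h0 : (fun u => Real.exp u * P10e u) 0 = 1 := by
    unfold P10e
    norm_num
  have key : 1 ≤ Real.exp t * P10e t := by
    calc (1:ℝ) = (fun u => Real.exp u * P10e u) 0 := h0.symm
    _ ≤ (fun u => Real.exp u * P10e u) t := hmono (self_mem_Ici) ht ht
  rw [Real.exp_neg]
  calc (Real.exp t)⁻¹ = (Real.exp t)⁻¹ * 1 := by rw [mul_one]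
  _ ≤ (Real.exp t)⁻¹ * (Real.exp t * P10e t) := by
      apply mul_le_mul_of_nonneg_left key
      positivity
  _ = P10e t := by
      rw [← mul_assoc, inv_mul_cancel₀ (Real.exp_pos t).ne', one_mul]

/-- the polynomial bound in `x` -/
def Qpoly (x : ℝ) : ℝ := 1 - x^2/2 + x^4/8 - x^6/48 + x^8/384 - x^10/3840 + x^12/46080
  - x^14/645120 + x^16/10321920 - x^18/185794560 + x^20/3715891200

lemma exp_le_Qpoly (x : ℝ) : Real.exp (-(x^2)/2) ≤ Qpoly x := by
  have h := exp_le_P10e (t := x^2/2) (by positivity)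
  have h1 : -(x^2)/2 = -(x^2/2) := by ring
  rw [h1]
  calc Real.exp (-(x^2/2)) ≤ P10e (x^2/2) := h
  _ = Qpoly x := by unfold P10e Qpoly; ring

/-- antiderivative of `Qpoly` -/
def AQ (x : ℝ) : ℝ := x - x^3/6 + x^5/40 - x^7/336 + x^9/3456 - x^11/42240 + x^13/599040
  - x^15/9676800 + x^17/175472640 - x^19/3530096640 + x^21/78033715200

lemma hasDerivAt_AQ (x : ℝ) : HasDerivAt AQ (Qpoly x) x := by
  have h := ((((((((((hasDerivAt_id x).sub ((hasDerivAt_pow 3 x).div_const 6)).add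
    ((hasDerivAt_pow 5 x).div_const 40)).sub ((hasDerivAt_pow 7 x).div_const 336)).add
    ((hasDerivAt_pow 9 x).div_const 3456)).sub ((hasDerivAt_pow 11 x).div_const 42240)).add
    ((hasDerivAt_pow 13 x).div_const 599040)).sub ((hasDerivAt_pow 15 x).div_const 9676800)).add
    ((hasDerivAt_pow 17 x).div_const 175472640)).sub
    ((hasDerivAt_pow 19 x).div_const 3530096640)).add
    ((hasDerivAt_pow 21 x).div_const 78033715200)
  refine HasDerivAt.congr_deriv h ?_
  unfold Qpoly
  push_cast
  norm_num
  ring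

lemma cont_Qpoly : Continuous Qpoly := by unfold Qpoly; continuity

lemma intervalIntegral_Qpoly (a b : ℝ) (hab : a ≤ b) :
    ∫ x in a..b, Qpoly x = AQ b - AQ a := by
  apply intervalIntegral.integral_eq_sub_of_hasDerivAt
  · intro x _
    exact hasDerivAt_AQ x
  · exact (cont_Qpoly.intervalIntegrable a b)

lemma integrable_exp_sq : Integrable (fun x : ℝ => Real.exp (-(x^2)/2)) := by
  have h : (fun x : ℝ => Real.exp (-(x^2)/2)) = (fun x : ℝ => Real.exp (-(1/2 : ℝ) * x^2)) := by
    funext x; ring_nf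
  rw [h]
  exact integrable_exp_neg_mul_sq (by norm_num)


/-! ### improper integrals (ported Mill machinery) -/

lemma hasDeriv_negexp (x : ℝ) :
    HasDerivAt (fun y : ℝ => -Real.exp (-(y^2)/2)) (x * Real.exp (-(x^2)/2)) x := by
  have h1 : HasDerivAt (fun y : ℝ => -(y^2)/2) (-x) x := by
    have := ((hasDerivAt_pow 2 x).neg).div_const 2
    refine HasDerivAt.congr_deriv this ?_
    simp
    ring
  have h2 := (h1.exp).neg
  refine HasDerivAt.congr_deriv h2 ?_
  ring

lemma tendsto_negexp : Tendsto (fun y : ℝ => -Real.exp (-(y^2)/2)) atTop (nhds 0) := by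
  rw [show (0:ℝ) = -0 by ring]
  apply Tendsto.neg
  apply Real.tendsto_exp_atBot.comp
  have h1 : Tendsto (fun y : ℝ => y^2) atTop atTop := tendsto_pow_atTop (by norm_num)
  have h2 : Tendsto (fun y : ℝ => y^2/2) atTop atTop := h1.atTop_div_const (by norm_num)
  have := tendsto_neg_atTop_atBot.comp h2
  convert this using 2 with y
  simp [Function.comp]
  ring

lemma integrable_xexp (c : ℝ) (hc : 0 ≤ c) :
    IntegrableOn (fun x : ℝ => x * Real.exp (-(x^2)/2)) (Ioi c) := by
  apply integrableOn_Ioi_deriv_of_nonneg' (g := fun y : ℝ => -Real.exp (-(y^2)/2))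
    (fun x _ => hasDeriv_negexp x) ?_ tendsto_negexp
  · intro x hx
    have hx' : 0 < x := lt_of_le_of_lt hc hx
    positivity

lemma integral_xexp (c : ℝ) (hc : 0 < c) :
    ∫ x in Ioi c, x * Real.exp (-(x^2)/2) = Real.exp (-(c^2)/2) := by
  have := integral_Ioi_of_hasDerivAt_of_nonneg' (g := fun y : ℝ => -Real.exp (-(y^2)/2))
    (g' := fun x => x * Real.exp (-(x^2)/2)) (a := c)
    (fun x _ => hasDeriv_negexp x) ?_ tendsto_negexp
  · rw [this]; ring
  · intro x hx
    have hx' : 0 < x := lt_trans hc hx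
    positivity

/-! ### two-sided tail reduction -/

lemma gauss_map_neg' (v : ℝ≥0) :
    Measure.map (fun x : ℝ => -x) (gaussianReal 0 v) = gaussianReal 0 v := by
  have h := gaussianReal_map_const_mul (μ := 0) (v := v) (-1)
  simp only [neg_one_mul, mul_zero] at h
  rw [h]
  congr 1
  ext
  norm_num

lemma abs_tail_le (c : ℝ) (hc : 0 < c) :
    gaussianReal 0 1 {x | c ≤ |x|} ≤ 2 * gaussianReal 0 1 (Ici c) := by
  have low : gaussianReal 0 1 (Iic (-c)) = gaussianReal 0 1 (Ici c) := by
    conv_rhs => rw [← gauss_map_neg' 1]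
    rw [Measure.map_apply measurable_neg measurableSet_Ici]
    congr 1
    ext x
    simp only [mem_Iic, mem_preimage, mem_Ici]
    constructor
    · intro h; linarith
    · intro h; linarith
  have hsub : {x : ℝ | c ≤ |x|} ⊆ Iic (-c) ∪ Ici c := by
    intro x hx
    have hx' : c ≤ |x| := hx
    rcases le_or_gt x 0 with h | h
    · left
      simp only [mem_Iic]
      rw [abs_of_nonpos h] at hx'
      linarith
    · right
      simp only [mem_Ici]
      rwa [abs_of_pos h] at hx'
  calc gaussianReal 0 1 {x : ℝ | c ≤ |x|} ≤ gaussianReal 0 1 (Iic (-c) ∪ Ici c) :=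
        measure_mono hsub
  _ ≤ gaussianReal 0 1 (Iic (-c)) + gaussianReal 0 1 (Ici c) := measure_union_le _ _
  _ = _ := by rw [low, two_mul]

/-! ### lower bound on P(|Z| >= 1) -/

lemma plower : ENNReal.ofReal 0.3172 ≤ gaussianReal 0 1 {x : ℝ | 1 ≤ |x|} := by
  have h1ne : (1 : ℝ≥0) ≠ 0 := one_ne_zero
  have hIe : ∫ x in Ioo (-1:ℝ) 1, Real.exp (-(x^2)/2) ≤ 1.71125 := by
    have hmono : ∫ x in Ioo (-1:ℝ) 1, Real.exp (-(x^2)/2) ≤ ∫ x in Ioo (-1:ℝ) 1, Qpoly x := by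
      apply setIntegral_mono_on
      · exact integrable_exp_sq.integrableOn
      · exact (cont_Qpoly.integrableOn_Icc).mono_set Ioo_subset_Icc_self
      · exact measurableSet_Ioo
      · intro x _
        exact exp_le_Qpoly x
    have heval : ∫ x in Ioo (-1:ℝ) 1, Qpoly x = AQ 1 - AQ (-1) := by
      rw [← MeasureTheory.integral_Ioc_eq_integral_Ioo,
        ← intervalIntegral.integral_of_le (by norm_num : (-1:ℝ) ≤ 1)]
      exact intervalIntegral_Qpoly (-1) 1 (by norm_num)
    rw [heval] at hmono
    refine le_trans hmono ?_
    unfold AQ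
    norm_num
  have hIoo : gaussianReal 0 1 (Ioo (-1:ℝ) 1) ≤ ENNReal.ofReal 0.6828 := by
    rw [gaussianReal_apply_eq_integral 0 h1ne (Ioo (-1:ℝ) 1)]
    apply ENNReal.ofReal_le_ofReal
    have hsplit : ∫ x in Ioo (-1:ℝ) 1, gaussianPDFReal 0 1 x
        = (Real.sqrt (2*Real.pi))⁻¹ * ∫ x in Ioo (-1:ℝ) 1, Real.exp (-(x^2)/2) := by
      rw [pdf_eq, ← MeasureTheory.integral_const_mul]
    rw [hsplit]
    have hnn : 0 ≤ ∫ x in Ioo (-1:ℝ) 1, Real.exp (-(x^2)/2) :=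
      setIntegral_nonneg measurableSet_Ioo (fun x _ => (Real.exp_pos _).le)
    calc (Real.sqrt (2*Real.pi))⁻¹ * ∫ x in Ioo (-1:ℝ) 1, Real.exp (-(x^2)/2)
        ≤ 0.39895 * 1.71125 := by
          apply mul_le_mul inv_sqrt_two_pi_le hIe hnn (by norm_num)
    _ ≤ 0.6828 := by norm_num
  have hcompl : {x : ℝ | 1 ≤ |x|} = (Ioo (-1 : ℝ) 1)ᶜ := by
    ext x
    simp only [mem_setOf_eq, mem_compl_iff, mem_Ioo, not_and_or, not_lt]
    constructor
    · intro h
      rcases le_or_gt x 0 with hx | hx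
      · left; rw [abs_of_nonpos hx] at h; linarith
      · right; rwa [abs_of_pos hx] at h
    · intro h
      rcases h with h | h
      · rw [abs_of_nonpos (by linarith)]; linarith
      · rw [abs_of_pos (by linarith)]; exact h
  rw [hcompl, measure_compl measurableSet_Ioo (measure_ne_top _ _)]
  have huniv : (gaussianReal 0 1 : Measure ℝ) Set.univ = 1 := measure_univ
  rw [huniv]
  calc ENNReal.ofReal 0.3172 ≤ 1 - ENNReal.ofReal 0.6828 := by
        rw [← ENNReal.ofReal_one, ← ENNReal.ofReal_sub _ (by norm_num : (0:ℝ) ≤ 0.6828)]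
        apply ENNReal.ofReal_le_ofReal
        norm_num
  _ ≤ 1 - gaussianReal 0 1 (Ioo (-1 : ℝ) 1) := tsub_le_tsub_left hIoo 1

/-! ### upper bound on P(|Z| >= 2) and at 1.99 -/

lemma tail2 : gaussianReal 0 1 {x : ℝ | 2 ≤ |x|} ≤ ENNReal.ofReal 0.0478 := by
  have h1ne : (1 : ℝ≥0) ≠ 0 := one_ne_zero
  -- tail integral of exp
  have hIoc : ∫ x in Ioc (2:ℝ) (5/2), Real.exp (-(x^2)/2) ≤ 0.04225 := by
    have hmono : ∫ x in Ioc (2:ℝ) (5/2), Real.exp (-(x^2)/2) ≤ ∫ x in Ioc (2:ℝ) (5/2), Qpoly x := by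
      apply setIntegral_mono_on
      · exact integrable_exp_sq.integrableOn
      · exact (cont_Qpoly.integrableOn_Icc).mono_set Ioc_subset_Icc_self
      · exact measurableSet_Ioc
      · intro x _
        exact exp_le_Qpoly x
    have heval : ∫ x in Ioc (2:ℝ) (5/2), Qpoly x = AQ (5/2) - AQ 2 := by
      rw [← intervalIntegral.integral_of_le (by norm_num : (2:ℝ) ≤ 5/2)]
      exact intervalIntegral_Qpoly 2 (5/2) (by norm_num)
    rw [heval] at hmono
    refine le_trans hmono ?_
    unfold AQ
    norm_num
  have hIoi25 : ∫ x in Ioi (5/2:ℝ), Real.exp (-(x^2)/2) ≤ 0.01758 := by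
    have hmono : ∫ x in Ioi (5/2:ℝ), Real.exp (-(x^2)/2)
        ≤ ∫ x in Ioi (5/2:ℝ), (2/5) * (x * Real.exp (-(x^2)/2)) := by
      apply setIntegral_mono_on
      · exact integrable_exp_sq.integrableOn
      · exact (integrable_xexp (5/2) (by norm_num)).const_mul _
      · exact measurableSet_Ioi
      · intro x hx
        have hx' : (5/2:ℝ) < x := hx
        have hpos := Real.exp_pos (-(x^2)/2)
        nlinarith
    rw [MeasureTheory.integral_const_mul, integral_xexp (5/2) (by norm_num)] at hmono
    refine le_trans hmono ?_
    have hexp : Real.exp (-((5/2:ℝ)^2)/2) ≤ 0.04395 := by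
      have : -(((5/2):ℝ)^2)/2 = -(25/8 : ℝ) := by norm_num
      rw [this]
      apply exp_neg_le (by norm_num) (by norm_num)
      norm_num
    nlinarith
  have hIoi2 : ∫ x in Ioi (2:ℝ), Real.exp (-(x^2)/2) ≤ 0.05983 := by
    have hunion : Ioc (2:ℝ) (5/2) ∪ Ioi (5/2) = Ioi 2 := Ioc_union_Ioi_eq_Ioi (by norm_num)
    have hdisj : Disjoint (Ioc (2:ℝ) (5/2)) (Ioi (5/2)) := by
      rw [Set.disjoint_left]
      intro x hx1 hx2
      exact absurd hx1.2 (not_le.mpr hx2)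
    rw [← hunion, MeasureTheory.setIntegral_union hdisj measurableSet_Ioi
      integrable_exp_sq.integrableOn integrable_exp_sq.integrableOn]
    linarith
  -- measure of Ici 2
  have hIci : gaussianReal 0 1 (Ici (2:ℝ)) ≤ ENNReal.ofReal 0.02387 := by
    rw [gaussianReal_apply_eq_integral 0 h1ne (Ici (2:ℝ))]
    apply ENNReal.ofReal_le_ofReal
    have h1 : ∫ x in Ici (2:ℝ), gaussianPDFReal 0 1 x = ∫ x in Ioi (2:ℝ), gaussianPDFReal 0 1 x :=
      integral_Ici_eq_integral_Ioi
    have hsplit : ∫ x in Ioi (2:ℝ), gaussianPDFReal 0 1 x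
        = (Real.sqrt (2*Real.pi))⁻¹ * ∫ x in Ioi (2:ℝ), Real.exp (-(x^2)/2) := by
      rw [pdf_eq, ← MeasureTheory.integral_const_mul]
    rw [h1, hsplit]
    have hnn : 0 ≤ ∫ x in Ioi (2:ℝ), Real.exp (-(x^2)/2) :=
      setIntegral_nonneg measurableSet_Ioi (fun x _ => (Real.exp_pos _).le)
    calc (Real.sqrt (2*Real.pi))⁻¹ * ∫ x in Ioi (2:ℝ), Real.exp (-(x^2)/2)
        ≤ 0.39895 * 0.05983 := mul_le_mul inv_sqrt_two_pi_le hIoi2 hnn (by norm_num)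
    _ ≤ 0.02387 := by norm_num
  calc gaussianReal 0 1 {x : ℝ | 2 ≤ |x|} ≤ 2 * gaussianReal 0 1 (Ici 2) :=
        abs_tail_le 2 (by norm_num)
  _ ≤ 2 * ENNReal.ofReal 0.02387 := mul_le_mul_right hIci _
  _ = ENNReal.ofReal 0.04774 := by
        rw [show (2:ℝ≥0∞) = ENNReal.ofReal 2 by norm_num,
          ← ENNReal.ofReal_mul (by norm_num : (0:ℝ) ≤ 2)]
        norm_num
  _ ≤ ENNReal.ofReal 0.0478 := ENNReal.ofReal_le_ofReal (by norm_num)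

lemma intInt (a b : ℝ) : IntervalIntegrable (gaussianPDFReal 0 1) volume a b :=
  (integrable_gaussianPDFReal 0 1).intervalIntegrable

lemma piece (a b M : ℝ) (hab : a ≤ b)
    (hM : ∀ x, a ≤ x → x ≤ b → gaussianPDFReal 0 1 x ≤ M) :
    ∫ x in a..b, gaussianPDFReal 0 1 x ≤ (b-a) * M := by
  have h := intervalIntegral.integral_mono_on hab (intInt a b)
    (intervalIntegrable_const (c := M)) (fun x hx => hM x hx.1 hx.2)
  simpa [intervalIntegral.integral_const, smul_eq_mul] using h

lemma band_piece (a b : ℝ) (hab : a ≤ b) (hsq : ∀ x, a ≤ x → x ≤ b → (3.9601:ℝ) ≤ x^2) :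
    gaussianReal 0 1 (Icc a b) ≤ ENNReal.ofReal ((b - a) * 0.05518) := by
  have h1ne : (1 : ℝ≥0) ≠ 0 := one_ne_zero
  rw [gaussianReal_apply_eq_integral 0 h1ne (Icc a b)]
  apply ENNReal.ofReal_le_ofReal
  have h1 : ∫ x in Icc a b, gaussianPDFReal 0 1 x = ∫ x in Ioc a b, gaussianPDFReal 0 1 x :=
    integral_Icc_eq_integral_Ioc
  rw [h1, ← intervalIntegral.integral_of_le hab]
  have hexp : Real.exp (-(1.98005:ℝ)) ≤ 0.13823 := by
    apply exp_neg_le (by norm_num) (by norm_num)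
    norm_num
  have hM : ∀ x, a ≤ x → x ≤ b → gaussianPDFReal 0 1 x ≤ 0.39895 * 0.13823 := by
    intro x h1 h2
    apply pdf_le _ _ ?_ (by norm_num)
    calc Real.exp (-(x^2)/2) ≤ Real.exp (-(1.98005:ℝ)) := by
          apply Real.exp_le_exp.mpr
          have := hsq x h1 h2
          linarith
    _ ≤ 0.13823 := hexp
  calc ∫ x in a..b, gaussianPDFReal 0 1 x ≤ (b-a) * (0.39895 * 0.13823) :=
        piece a b _ hab hM
  _ ≤ (b-a) * 0.05518 := by
        apply mul_le_mul_of_nonneg_left (by norm_num) (by linarith)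

lemma tail199 : gaussianReal 0 1 {x : ℝ | 1.99 ≤ |x|} ≤ ENNReal.ofReal 0.0490 := by
  have hsub : {x : ℝ | 1.99 ≤ |x|}
      ⊆ (Icc (-2:ℝ) (-1.99) ∪ Icc (1.99:ℝ) 2) ∪ {x : ℝ | 2 ≤ |x|} := by
    intro x hx
    have hx' : (1.99:ℝ) ≤ |x| := hx
    rcases le_or_gt 2 |x| with h2 | h2
    · right; exact h2
    · left
      rcases le_or_gt x 0 with hs | hs
      · left
        rw [abs_of_nonpos hs] at hx' h2
        constructor <;> linarith
      · right
        rw [abs_of_pos hs] at hx' h2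
        constructor <;> linarith
  have hb1 : gaussianReal 0 1 (Icc (-2:ℝ) (-1.99)) ≤ ENNReal.ofReal 0.000552 := by
    calc gaussianReal 0 1 (Icc (-2:ℝ) (-1.99))
        ≤ ENNReal.ofReal (((-1.99:ℝ) - (-2)) * 0.05518) :=
          band_piece _ _ (by norm_num) (fun x h1 h2 => by nlinarith)
    _ ≤ ENNReal.ofReal 0.000552 := ENNReal.ofReal_le_ofReal (by norm_num)
  have hb2 : gaussianReal 0 1 (Icc (1.99:ℝ) 2) ≤ ENNReal.ofReal 0.000552 := by
    calc gaussianReal 0 1 (Icc (1.99:ℝ) 2)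
        ≤ ENNReal.ofReal (((2:ℝ) - 1.99) * 0.05518) :=
          band_piece _ _ (by norm_num) (fun x h1 h2 => by nlinarith)
    _ ≤ ENNReal.ofReal 0.000552 := ENNReal.ofReal_le_ofReal (by norm_num)
  calc gaussianReal 0 1 {x : ℝ | 1.99 ≤ |x|}
      ≤ gaussianReal 0 1 ((Icc (-2:ℝ) (-1.99) ∪ Icc (1.99:ℝ) 2) ∪ {x : ℝ | 2 ≤ |x|}) :=
        measure_mono hsub
  _ ≤ gaussianReal 0 1 (Icc (-2:ℝ) (-1.99) ∪ Icc (1.99:ℝ) 2)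
      + gaussianReal 0 1 {x : ℝ | 2 ≤ |x|} := measure_union_le _ _
  _ ≤ (gaussianReal 0 1 (Icc (-2:ℝ) (-1.99)) + gaussianReal 0 1 (Icc (1.99:ℝ) 2))
      + gaussianReal 0 1 {x : ℝ | 2 ≤ |x|} :=
        add_le_add_left (measure_union_le _ _) _
  _ ≤ (ENNReal.ofReal 0.000552 + ENNReal.ofReal 0.000552) + ENNReal.ofReal 0.0478 :=
        add_le_add (add_le_add hb1 hb2) tail2
  _ ≤ ENNReal.ofReal 0.0490 := by
        rw [← ENNReal.ofReal_add (by norm_num) (by norm_num),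
          ← ENNReal.ofReal_add (by norm_num) (by norm_num)]
        apply ENNReal.ofReal_le_ofReal
        norm_num



variable {Ω : Type*} [MeasurableSpace Ω]

def tg (m k : ℕ) : ℝ := (k:ℝ)/(m:ℝ)

lemma tg_zero (m : ℕ) : tg m 0 = 0 := by simp [tg]

lemma tg_self {m : ℕ} (hm : 0 < m) : tg m m = 1 := by
  have : (m:ℝ) ≠ 0 := Nat.cast_ne_zero.mpr hm.ne'
  simp [tg, this]

lemma tg_nonneg (m k : ℕ) : 0 ≤ tg m k := by
  unfold tg; positivity

lemma tg_mono (m : ℕ) {k k' : ℕ} (h : k ≤ k') : tg m k ≤ tg m k' := by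
  unfold tg
  rcases Nat.eq_zero_or_pos m with hm | hm
  · simp [hm]
  · have hm' : (0:ℝ) < m := Nat.cast_pos.mpr hm
    exact div_le_div_of_nonneg_right (by exact_mod_cast h) hm'.le

def Xinc (B : ℝ → Ω → ℝ) (m : ℕ) (i : Fin m) : Ω → ℝ :=
  fun ω => B (tg m ((i:ℕ)+1)) ω - B (tg m (i:ℕ)) ω

def Ev (B : ℝ → Ω → ℝ) (m : ℕ) (a : ℝ) (k : ℕ) : Set Ω :=
  {ω | a ≤ |B (tg m k) ω| ∧ ∀ l, l < k → |B (tg m l) ω| < a}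

lemma meas_Ev (B : ℝ → Ω → ℝ) (hmeas : ∀ t, Measurable (B t)) (m : ℕ) (a : ℝ) (k : ℕ) :
    MeasurableSet (Ev B m a k) := by
  have h1 : MeasurableSet {ω : Ω | a ≤ |B (tg m k) ω|} :=
    measurableSet_le measurable_const (hmeas _).abs
  have h2 : MeasurableSet {ω : Ω | ∀ l, l < k → |B (tg m l) ω| < a} := by
    have heq : {ω : Ω | ∀ l, l < k → |B (tg m l) ω| < a}
        = ⋂ l ∈ Finset.range k, {ω : Ω | |B (tg m l) ω| < a} := by
      ext ω; simp [Finset.mem_range]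
    rw [heq]
    exact MeasurableSet.biInter (Finset.range k).countable_toSet
      (fun l _ => measurableSet_lt (hmeas _).abs measurable_const)
  have : Ev B m a k = {ω : Ω | a ≤ |B (tg m k) ω|} ∩ {ω : Ω | ∀ l, l < k → |B (tg m l) ω| < a} := by
    ext ω; simp [Ev, mem_inter_iff, mem_setOf_eq]
  rw [this]; exact h1.inter h2

lemma Ev_disj (B : ℝ → Ω → ℝ) (m : ℕ) (a : ℝ) {k k' : ℕ} (h : k ≠ k') :
    Disjoint (Ev B m a k) (Ev B m a k') := by
  rcases h.lt_or_gt with hlt | hlt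
  · rw [Set.disjoint_left]
    rintro ω ⟨h1, _⟩ ⟨_, h2⟩
    exact absurd h1 (not_le.mpr (h2 k hlt))
  · rw [Set.disjoint_left]
    rintro ω ⟨_, h2⟩ ⟨h1, _⟩
    exact absurd h1 (not_le.mpr (h2 k' hlt))

def sigF (m k l : ℕ) (y : {i : Fin m // i ∈ Finset.univ.filter (fun i : Fin m => (i:ℕ) < k)} → ℝ) : ℝ :=
  ∑ i : {i : Fin m // i ∈ Finset.univ.filter (fun i : Fin m => (i:ℕ) < k)},
    if ((i : Fin m) : ℕ) < l then y i else 0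

def tauF (m k : ℕ) (y : {i : Fin m // i ∈ Finset.univ.filter (fun i : Fin m => ¬ (i:ℕ) < k)} → ℝ) : ℝ :=
  ∑ i : {i : Fin m // i ∈ Finset.univ.filter (fun i : Fin m => ¬ (i:ℕ) < k)}, y i

lemma meas_sigF (m k l : ℕ) : Measurable (sigF m k l) := by
  unfold sigF
  apply Finset.measurable_sum
  intro i _
  by_cases h : ((i : Fin m) : ℕ) < l
  · simpa [h] using measurable_pi_apply i
  · simp only [h, if_false]
    exact measurable_const

lemma meas_tauF (m k : ℕ) : Measurable (tauF m k) := by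
  unfold tauF
  apply Finset.measurable_sum
  intro i _
  exact measurable_pi_apply i

lemma sum_filter_lt (B : ℝ → Ω → ℝ) (hB0 : ∀ ω, B 0 ω = 0) (m k : ℕ) (hkm : k ≤ m) (ω : Ω) :
    ∑ i ∈ Finset.univ.filter (fun i : Fin m => (i:ℕ) < k), Xinc B m i ω = B (tg m k) ω := by
  classical
  rw [Finset.sum_filter]
  have h2 : ∑ i : Fin m, (if (i:ℕ) < k then Xinc B m i ω else 0)
      = ∑ j ∈ Finset.range m, (if j < k then (B (tg m (j+1)) ω - B (tg m j) ω) else 0) :=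
    Fin.sum_univ_eq_sum_range (fun j => if j < k then (B (tg m (j+1)) ω - B (tg m j) ω) else 0) m
  rw [h2, ← Finset.sum_filter]
  have h3 : (Finset.range m).filter (fun j => j < k) = Finset.range k := by
    ext j
    simp only [Finset.mem_filter, Finset.mem_range]
    omega
  rw [h3, Finset.sum_range_sub (f := fun j => B (tg m j) ω), tg_zero, hB0, sub_zero]

lemma sigF_eq (B : ℝ → Ω → ℝ) (hB0 : ∀ ω, B 0 ω = 0) (m k l : ℕ) (hlk : l ≤ k) (hkm : k ≤ m)
    (ω : Ω) :
    sigF m k l (fun i => Xinc B m (i : Fin m) ω) = B (tg m l) ω := by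
  classical
  unfold sigF
  rw [Finset.sum_coe_sort (f := fun i : Fin m => if ((i : Fin m) : ℕ) < l then Xinc B m i ω else 0)]
  rw [Finset.sum_filter]
  have h1 : ∀ i : Fin m, (if (i:ℕ) < k then (if (i:ℕ) < l then Xinc B m i ω else 0) else 0)
      = if (i:ℕ) < l then Xinc B m i ω else 0 := by
    intro i
    by_cases h : (i:ℕ) < l
    · simp [h, lt_of_lt_of_le h hlk]
    · by_cases h2 : (i:ℕ) < k <;> simp [h, h2]
  rw [Finset.sum_congr rfl (fun i _ => h1 i)]
  have h2 : ∑ i : Fin m, (if (i:ℕ) < l then Xinc B m i ω else 0)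
      = ∑ j ∈ Finset.range m, (if j < l then (B (tg m (j+1)) ω - B (tg m j) ω) else 0) :=
    Fin.sum_univ_eq_sum_range (fun j => if j < l then (B (tg m (j+1)) ω - B (tg m j) ω) else 0) m
  rw [h2, ← Finset.sum_filter]
  have h3 : (Finset.range m).filter (fun j => j < l) = Finset.range l := by
    ext j
    simp only [Finset.mem_filter, Finset.mem_range]
    omega
  rw [h3, Finset.sum_range_sub (f := fun j => B (tg m j) ω), tg_zero, hB0, sub_zero]

lemma tauF_eq (B : ℝ → Ω → ℝ) (hB0 : ∀ ω, B 0 ω = 0) (m k : ℕ) (hkm : k ≤ m) (ω : Ω) :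
    tauF m k (fun i => Xinc B m (i : Fin m) ω) = B (tg m m) ω - B (tg m k) ω := by
  classical
  unfold tauF
  rw [Finset.sum_coe_sort (f := fun i : Fin m => Xinc B m i ω)]
  have hsplit := Finset.sum_filter_add_sum_filter_not Finset.univ
    (fun i : Fin m => (i:ℕ) < k) (fun i : Fin m => Xinc B m i ω)
  have hfull : ∑ i : Fin m, Xinc B m i ω = B (tg m m) ω := by
    have h := Fin.sum_univ_eq_sum_range (fun j => B (tg m (j+1)) ω - B (tg m j) ω) m
    calc ∑ i : Fin m, Xinc B m i ω
        = ∑ j ∈ Finset.range m, (B (tg m (j+1)) ω - B (tg m j) ω) := h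
    _ = B (tg m m) ω := by
        rw [Finset.sum_range_sub (f := fun j => B (tg m j) ω), tg_zero, hB0, sub_zero]
  have h4 := sum_filter_lt B hB0 m k hkm ω
  linarith [hsplit, hfull, h4]

/-- The core independence identity. -/
lemma core (P : Measure Ω) [IsProbabilityMeasure P]
    (B : ℝ → Ω → ℝ) (hmeas : ∀ t, Measurable (B t)) (hB0 : ∀ ω, B 0 ω = 0)
    (hindep : ∀ (n : ℕ) (t : Fin (n + 1) → ℝ), Monotone t → 0 ≤ t 0 →
      iIndepFun
        (fun i : Fin n => fun ω => B (t i.succ) ω - B (t i.castSucc) ω) P)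
    (m : ℕ) (a : ℝ) (k : ℕ) (hkm : k ≤ m) (s : ℝ) :
    P ((Ev B m a k ∩ {ω | 0 ≤ s * B (tg m k) ω}) ∩ {ω | 0 ≤ s * (B (tg m m) ω - B (tg m k) ω)})
      = P (Ev B m a k ∩ {ω | 0 ≤ s * B (tg m k) ω})
        * P {ω | 0 ≤ s * (B (tg m m) ω - B (tg m k) ω)} := by
  classical
  -- independence of increments
  have hX : iIndepFun (Xinc B m) P := by
    have hmono : Monotone (fun i : Fin (m+1) => tg m (i:ℕ)) := by
      intro i j hij
      exact tg_mono m (by exact_mod_cast hij)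
    have h0 : 0 ≤ tg m ((0 : Fin (m+1)):ℕ) := tg_nonneg _ _
    have h := hindep m (fun i : Fin (m+1) => tg m (i:ℕ)) hmono h0
    have heq : (fun i : Fin m => fun ω => B (tg m ((i.succ : Fin (m+1)):ℕ)) ω
        - B (tg m ((i.castSucc : Fin (m+1)):ℕ)) ω) = Xinc B m := by
      funext i ω
      simp [Xinc, Fin.val_succ, Fin.coe_castSucc]
    rwa [heq] at h
  set Sfin := Finset.univ.filter (fun i : Fin m => (i:ℕ) < k) with hSfin
  set Tfin := Finset.univ.filter (fun i : Fin m => ¬ (i:ℕ) < k) with hTfin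
  have hdisj : Disjoint Sfin Tfin := Finset.disjoint_filter_filter_not _ _ _
  have hXmeas : ∀ i, Measurable (Xinc B m i) := fun i => (hmeas _).sub (hmeas _)
  have hind : IndepFun (fun ω (i : Sfin) => Xinc B m (i : Fin m) ω)
      (fun ω (i : Tfin) => Xinc B m (i : Fin m) ω) P :=
    hX.indepFun_finset Sfin Tfin hdisj hXmeas
  -- the events as preimages
  set Aset : Set ({i : Fin m // i ∈ Sfin} → ℝ) :=
    {y | (a ≤ |sigF m k k y| ∧ ∀ l, l < k → |sigF m k l y| < a) ∧ 0 ≤ s * sigF m k k y}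
    with hAset
  set Bset : Set ({i : Fin m // i ∈ Tfin} → ℝ) := {y | 0 ≤ s * tauF m k y} with hBset
  have hAmeas : MeasurableSet Aset := by
    have h1 : MeasurableSet {y : {i : Fin m // i ∈ Sfin} → ℝ | a ≤ |sigF m k k y|} :=
      measurableSet_le measurable_const (meas_sigF m k k).abs
    have h2 : MeasurableSet {y : {i : Fin m // i ∈ Sfin} → ℝ | ∀ l, l < k → |sigF m k l y| < a} := by
      have heq : {y : {i : Fin m // i ∈ Sfin} → ℝ | ∀ l, l < k → |sigF m k l y| < a}
          = ⋂ l ∈ Finset.range k, {y : {i : Fin m // i ∈ Sfin} → ℝ | |sigF m k l y| < a} := by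
        ext y; simp [Finset.mem_range]
      rw [heq]
      exact MeasurableSet.biInter (Finset.range k).countable_toSet
        (fun l _ => measurableSet_lt (meas_sigF m k l).abs measurable_const)
    have h3 : MeasurableSet {y : {i : Fin m // i ∈ Sfin} → ℝ | 0 ≤ s * sigF m k k y} :=
      measurableSet_le measurable_const ((meas_sigF m k k).const_mul s)
    have heq2 : Aset = ({y : {i : Fin m // i ∈ Sfin} → ℝ | a ≤ |sigF m k k y|}
        ∩ {y | ∀ l, l < k → |sigF m k l y| < a}) ∩ {y | 0 ≤ s * sigF m k k y} := by
      ext y; simp [hAset, mem_inter_iff, mem_setOf_eq, and_assoc]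
    rw [heq2]
    exact (h1.inter h2).inter h3
  have hBmeas : MeasurableSet Bset :=
    measurableSet_le measurable_const ((meas_tauF m k).const_mul s)
  have hpre1 : Ev B m a k ∩ {ω | 0 ≤ s * B (tg m k) ω}
      = (fun ω (i : Sfin) => Xinc B m (i : Fin m) ω) ⁻¹' Aset := by
    ext ω
    have hsig : ∀ l, l ≤ k → sigF m k l (fun i : Sfin => Xinc B m (i : Fin m) ω)
        = B (tg m l) ω := fun l hl => sigF_eq B hB0 m k l hl hkm ω
    simp only [Ev, mem_inter_iff, mem_setOf_eq, mem_preimage, hAset]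
    rw [hsig k le_rfl]
    constructor
    · rintro ⟨⟨h1, h2⟩, h3⟩
      exact ⟨⟨h1, fun l hl => by rw [hsig l hl.le]; exact h2 l hl⟩, h3⟩
    · rintro ⟨⟨h1, h2⟩, h3⟩
      exact ⟨⟨h1, fun l hl => by rw [← hsig l hl.le]; exact h2 l hl⟩, h3⟩
  have hpre2 : {ω | 0 ≤ s * (B (tg m m) ω - B (tg m k) ω)}
      = (fun ω (i : Tfin) => Xinc B m (i : Fin m) ω) ⁻¹' Bset := by
    ext ω
    have htau := tauF_eq B hB0 m k hkm ω
    simp only [mem_setOf_eq, mem_preimage, hBset]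
    rw [htau]
  rw [hpre1, hpre2]
  exact hind.measure_inter_preimage_eq_mul Aset Bset hAmeas hBmeas


lemma gauss_map_neg (v : ℝ≥0) :
    Measure.map (fun x : ℝ => -x) (gaussianReal 0 v) = gaussianReal 0 v := by
  have h := gaussianReal_map_const_mul (μ := 0) (v := v) (-1)
  simp only [neg_one_mul, mul_zero] at h
  rw [h]
  congr 1
  ext
  norm_num

lemma gauss_half_signed (v : ℝ≥0) (s : ℝ) (hs : s = 1 ∨ s = -1) :
    (2 : ℝ≥0∞)⁻¹ ≤ gaussianReal 0 v {x | 0 ≤ s * x} := by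
  have hsymm : gaussianReal 0 v {x : ℝ | 0 ≤ x} = gaussianReal 0 v {x : ℝ | x ≤ 0} := by
    conv_lhs => rw [← gauss_map_neg v]
    rw [show {x : ℝ | 0 ≤ x} = Set.Ici (0:ℝ) from rfl,
      Measure.map_apply measurable_neg measurableSet_Ici]
    congr 1
    ext x; simp
  have hunion : (1 : ℝ≥0∞) ≤ gaussianReal 0 v {x : ℝ | 0 ≤ x} + gaussianReal 0 v {x : ℝ | x ≤ 0} := by
    have hsub : (Set.univ : Set ℝ) ⊆ {x : ℝ | 0 ≤ x} ∪ {x : ℝ | x ≤ 0} := by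
      intro x _; rcases le_total 0 x with h | h
      · exact Or.inl h
      · exact Or.inr h
    calc (1:ℝ≥0∞) = gaussianReal 0 v Set.univ := by simp
    _ ≤ gaussianReal 0 v ({x : ℝ | 0 ≤ x} ∪ {x : ℝ | x ≤ 0}) := measure_mono hsub
    _ ≤ _ := measure_union_le _ _
  have h2 : (2:ℝ≥0∞) ≠ 0 := by norm_num
  have h2' : (2:ℝ≥0∞) ≠ ⊤ := by norm_num
  have hpos : (2 : ℝ≥0∞)⁻¹ ≤ gaussianReal 0 v {x | 0 ≤ x} := by
    have hu2 : (1 : ℝ≥0∞) ≤ 2 * gaussianReal 0 v {x : ℝ | 0 ≤ x} := by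
      rw [two_mul]
      calc (1:ℝ≥0∞) ≤ _ := hunion
      _ = _ := by rw [hsymm]
    calc (2:ℝ≥0∞)⁻¹ = 2⁻¹ * 1 := by rw [mul_one]
    _ ≤ 2⁻¹ * (2 * gaussianReal 0 v {x : ℝ | 0 ≤ x}) := mul_le_mul_right hu2 _
    _ = gaussianReal 0 v {x : ℝ | 0 ≤ x} := by
        rw [← mul_assoc, ENNReal.inv_mul_cancel h2 h2', one_mul]
  rcases hs with rfl | rfl
  · have : {x : ℝ | 0 ≤ 1 * x} = {x : ℝ | 0 ≤ x} := by ext x; simp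
    rw [this]; exact hpos
  · have : {x : ℝ | 0 ≤ (-1) * x} = {x : ℝ | x ≤ 0} := by
      ext x; simp only [mem_setOf_eq, neg_one_mul]
      constructor <;> intro h <;> linarith
    rw [this, ← hsymm]; exact hpos

lemma half (P : Measure Ω) [IsProbabilityMeasure P]
    (B : ℝ → Ω → ℝ) (hmeas : ∀ t, Measurable (B t))
    (hgauss : ∀ s t : ℝ, 0 ≤ s → s ≤ t →
      Measure.map (fun ω => B t ω - B s ω) P = gaussianReal 0 ((t - s).toNNReal))
    (m : ℕ) (k : ℕ) (hkm : k ≤ m) (s : ℝ) (hs : s = 1 ∨ s = -1) :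
    (2 : ℝ≥0∞)⁻¹ ≤ P {ω | 0 ≤ s * (B (tg m m) ω - B (tg m k) ω)} := by
  have hmap := hgauss (tg m k) (tg m m) (tg_nonneg m k) (tg_mono m hkm)
  have hsetm : MeasurableSet {x : ℝ | 0 ≤ s * x} :=
    measurableSet_le measurable_const (measurable_id.const_mul s)
  have hfun : Measurable (fun ω => B (tg m m) ω - B (tg m k) ω) :=
    (hmeas _).sub (hmeas _)
  have hP : P {ω | 0 ≤ s * (B (tg m m) ω - B (tg m k) ω)}
      = gaussianReal 0 ((tg m m - tg m k).toNNReal) {x | 0 ≤ s * x} := by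
    rw [← hmap, Measure.map_apply hfun hsetm]
    rfl
  rw [hP]
  exact gauss_half_signed _ s hs

/-- Discrete Lévy-type maximal inequality on the grid `k/m`, `k ≤ m`. -/
lemma levy (P : Measure Ω) [IsProbabilityMeasure P]
    (B : ℝ → Ω → ℝ) (hmeas : ∀ t, Measurable (B t)) (hB0 : ∀ ω, B 0 ω = 0)
    (hgauss : ∀ s t : ℝ, 0 ≤ s → s ≤ t →
      Measure.map (fun ω => B t ω - B s ω) P = gaussianReal 0 ((t - s).toNNReal))
    (hindep : ∀ (n : ℕ) (t : Fin (n + 1) → ℝ), Monotone t → 0 ≤ t 0 →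
      iIndepFun
        (fun i : Fin n => fun ω => B (t i.succ) ω - B (t i.castSucc) ω) P)
    (m : ℕ) (hm : 0 < m) (a : ℝ) (ha : 0 < a) :
    P {ω | ∃ k, k ≤ m ∧ a ≤ |B (tg m k) ω|} ≤ 2 * gaussianReal 0 1 {x : ℝ | a ≤ |x|} := by
  classical
  -- G-events
  set G : ℕ → ℝ → Set Ω := fun k s =>
    (Ev B m a k ∩ {ω | 0 ≤ s * B (tg m k) ω}) ∩ {ω | 0 ≤ s * (B (tg m m) ω - B (tg m k) ω)}
    with hG
  have hGmeas : ∀ k s, MeasurableSet (G k s) := by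
    intro k s
    exact ((meas_Ev B hmeas m a k).inter
      (measurableSet_le measurable_const ((hmeas _).const_mul s))).inter
      (measurableSet_le measurable_const (((hmeas _).sub (hmeas _)).const_mul s))
  -- step 1 : covering by first-passage events
  have hsub : {ω | ∃ k, k ≤ m ∧ a ≤ |B (tg m k) ω|}
      ⊆ ⋃ k ∈ Finset.range (m+1), Ev B m a k := by
    rintro ω ⟨k, hk, hak⟩
    have hex : ∃ j, a ≤ |B (tg m j) ω| := ⟨k, hak⟩
    set j0 := Nat.find hex with hj0
    have hj0le : j0 ≤ k := Nat.find_min' hex hak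
    have hj0spec : a ≤ |B (tg m j0) ω| := Nat.find_spec hex
    have hj0min : ∀ l, l < j0 → |B (tg m l) ω| < a := by
      intro l hl
      have := Nat.find_min hex hl
      linarith [not_le.mp this]
    apply Set.mem_biUnion (Finset.mem_range.mpr (Nat.lt_succ_of_le (le_trans hj0le hk)))
    exact ⟨hj0spec, hj0min⟩
  -- step 2 : per-k bound
  have hperk : ∀ k, k ≤ m → P (Ev B m a k) ≤ 2 * P (G k 1) + 2 * P (G k (-1)) := by
    intro k hk
    have hhalf : ∀ s, s = 1 ∨ s = -1 →
        P (Ev B m a k ∩ {ω | 0 ≤ s * B (tg m k) ω}) ≤ 2 * P (G k s) := by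
      intro s hs
      have hcore := core P B hmeas hB0 hindep m a k hk s
      have hhalf2 := half P B hmeas hgauss m k hk s hs
      have h1 : (1:ℝ≥0∞) ≤ 2 * P {ω | 0 ≤ s * (B (tg m m) ω - B (tg m k) ω)} := by
        calc (1:ℝ≥0∞) = 2 * 2⁻¹ := by
              rw [ENNReal.mul_inv_cancel (by norm_num) (by norm_num)]
        _ ≤ _ := mul_le_mul_right hhalf2 _
      calc P (Ev B m a k ∩ {ω | 0 ≤ s * B (tg m k) ω})
          = P (Ev B m a k ∩ {ω | 0 ≤ s * B (tg m k) ω}) * 1 := by rw [mul_one]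
      _ ≤ P (Ev B m a k ∩ {ω | 0 ≤ s * B (tg m k) ω})
            * (2 * P {ω | 0 ≤ s * (B (tg m m) ω - B (tg m k) ω)}) := mul_le_mul_right h1 _
      _ = 2 * (P (Ev B m a k ∩ {ω | 0 ≤ s * B (tg m k) ω})
            * P {ω | 0 ≤ s * (B (tg m m) ω - B (tg m k) ω)}) := by rw [mul_left_comm]
      _ = 2 * P (G k s) := by rw [← hcore]
    have hcover : Ev B m a k ⊆ (Ev B m a k ∩ {ω | 0 ≤ (1:ℝ) * B (tg m k) ω})
        ∪ (Ev B m a k ∩ {ω | 0 ≤ (-1:ℝ) * B (tg m k) ω}) := by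
      intro ω hω
      rcases le_total 0 (B (tg m k) ω) with h | h
      · left; exact ⟨hω, by simpa using h⟩
      · right; exact ⟨hω, by simpa using h⟩
    calc P (Ev B m a k) ≤ P ((Ev B m a k ∩ {ω | 0 ≤ (1:ℝ) * B (tg m k) ω})
        ∪ (Ev B m a k ∩ {ω | 0 ≤ (-1:ℝ) * B (tg m k) ω})) := measure_mono hcover
    _ ≤ P (Ev B m a k ∩ {ω | 0 ≤ (1:ℝ) * B (tg m k) ω})
        + P (Ev B m a k ∩ {ω | 0 ≤ (-1:ℝ) * B (tg m k) ω}) := measure_union_le _ _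
    _ ≤ 2 * P (G k 1) + 2 * P (G k (-1)) :=
        add_le_add (hhalf 1 (Or.inl rfl)) (hhalf (-1) (Or.inr rfl))
  -- step 3 : sums of disjoint G's
  have hGdisj : ∀ s : ℝ, ((Finset.range (m+1) : Finset ℕ) : Set ℕ).PairwiseDisjoint
      (fun k => G k s) := by
    intro s k _ k' _ hkk'
    apply Disjoint.mono (inter_subset_left.trans inter_subset_left)
      (inter_subset_left.trans inter_subset_left)
    exact Ev_disj B m a hkk'
  have hGsum : ∀ s : ℝ, (s = 1 ∨ s = -1) →
      ∑ k ∈ Finset.range (m+1), P (G k s) ≤ P {ω | a ≤ s * B (tg m m) ω} := by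
    intro s hs
    rw [← measure_biUnion_finset (hGdisj s) (fun k _ => hGmeas k s)]
    apply measure_mono
    intro ω hω
    rcases Set.mem_iUnion₂.mp hω with ⟨k, hkmem, hωk⟩
    rcases hωk with ⟨⟨⟨h1, _⟩, h2⟩, h3⟩
    have h2' : (0:ℝ) ≤ s * B (tg m k) ω := h2
    have h3' : (0:ℝ) ≤ s * (B (tg m m) ω - B (tg m k) ω) := h3
    have hs1 : |s| = 1 := by rcases hs with rfl | rfl <;> norm_num
    have habs : a ≤ s * B (tg m k) ω := by
      calc a ≤ |B (tg m k) ω| := h1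
      _ = |s| * |B (tg m k) ω| := by rw [hs1, one_mul]
      _ = |s * B (tg m k) ω| := (abs_mul s _).symm
      _ = s * B (tg m k) ω := abs_of_nonneg h2'
    show a ≤ s * B (tg m m) ω
    have hring : s * B (tg m m) ω = s * B (tg m k) ω + s * (B (tg m m) ω - B (tg m k) ω) := by ring
    linarith
  -- step 4 : the two target events are disjoint
  have htarget : P {ω | a ≤ (1:ℝ) * B (tg m m) ω} + P {ω | a ≤ (-1:ℝ) * B (tg m m) ω}
      ≤ P {ω | a ≤ |B (tg m m) ω|} := by
    have hdisj2 : Disjoint {ω : Ω | a ≤ (1:ℝ) * B (tg m m) ω}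
        {ω : Ω | a ≤ (-1:ℝ) * B (tg m m) ω} := by
      rw [Set.disjoint_left]
      intro ω h1 h2
      simp only [mem_setOf_eq, one_mul, neg_one_mul] at h1 h2
      linarith
    have hmeas2 : MeasurableSet {ω : Ω | a ≤ (-1:ℝ) * B (tg m m) ω} :=
      measurableSet_le measurable_const ((hmeas _).const_mul _)
    rw [← measure_union hdisj2 hmeas2]
    apply measure_mono
    intro ω hω
    rcases hω with h | h
    · simp only [mem_setOf_eq, one_mul] at h
      exact le_trans h (le_abs_self _)
    · simp only [mem_setOf_eq, neg_one_mul] at h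
      exact le_trans h (neg_le_abs _)
  -- step 5 : identify the law of B 1
  have hlaw : P {ω | a ≤ |B (tg m m) ω|} = gaussianReal 0 1 {x : ℝ | a ≤ |x|} := by
    have hmap := hgauss 0 1 le_rfl zero_le_one
    have hfun : (fun ω => B 1 ω - B 0 ω) = B 1 := by
      funext ω; rw [hB0, sub_zero]
    rw [hfun] at hmap
    have : (1 - 0 : ℝ).toNNReal = 1 := by norm_num
    rw [this] at hmap
    have hsetm : MeasurableSet {x : ℝ | a ≤ |x|} :=
      measurableSet_le measurable_const measurable_abs
    rw [tg_self hm, ← hmap, Measure.map_apply (hmeas 1) hsetm]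
    rfl
  -- assemble
  calc P {ω | ∃ k, k ≤ m ∧ a ≤ |B (tg m k) ω|}
      ≤ P (⋃ k ∈ Finset.range (m+1), Ev B m a k) := measure_mono hsub
  _ ≤ ∑ k ∈ Finset.range (m+1), P (Ev B m a k) := measure_biUnion_finset_le _ _
  _ ≤ ∑ k ∈ Finset.range (m+1), (2 * P (G k 1) + 2 * P (G k (-1))) :=
      Finset.sum_le_sum (fun k hk => hperk k (Nat.lt_succ_iff.mp (Finset.mem_range.mp hk)))
  _ = 2 * (∑ k ∈ Finset.range (m+1), P (G k 1))
      + 2 * (∑ k ∈ Finset.range (m+1), P (G k (-1))) := by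
      rw [Finset.sum_add_distrib, ← Finset.mul_sum, ← Finset.mul_sum]
  _ ≤ 2 * P {ω | a ≤ (1:ℝ) * B (tg m m) ω} + 2 * P {ω | a ≤ (-1:ℝ) * B (tg m m) ω} :=
      add_le_add (mul_le_mul_right (hGsum 1 (Or.inl rfl)) _)
        (mul_le_mul_right (hGsum (-1) (Or.inr rfl)) _)
  _ = 2 * (P {ω | a ≤ (1:ℝ) * B (tg m m) ω} + P {ω | a ≤ (-1:ℝ) * B (tg m m) ω}) := by
      rw [mul_add]
  _ ≤ 2 * P {ω | a ≤ |B (tg m m) ω|} := mul_le_mul_right htarget _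
  _ = 2 * gaussianReal 0 1 {x : ℝ | a ≤ |x|} := by rw [hlaw]


/-! ### Mill-type bound for the far tails -/

lemma mill_tail (c : ℝ) (hc : 0 < c) :
    gaussianReal 0 1 (Ici c) ≤
      ENNReal.ofReal ((Real.sqrt (2*Real.pi))⁻¹ * (Real.exp (-(c^2)/2) / c)) := by
  rw [gaussianReal_apply_eq_integral 0 one_ne_zero (Ici c)]
  apply ENNReal.ofReal_le_ofReal
  have h1 : ∫ x in Ici c, gaussianPDFReal 0 1 x = ∫ x in Ioi c, gaussianPDFReal 0 1 x :=
    integral_Ici_eq_integral_Ioi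
  have hsplit : ∫ x in Ioi c, gaussianPDFReal 0 1 x
      = (Real.sqrt (2*Real.pi))⁻¹ * ∫ x in Ioi c, Real.exp (-(x^2)/2) := by
    rw [pdf_eq, ← MeasureTheory.integral_const_mul]
  rw [h1, hsplit]
  apply mul_le_mul_of_nonneg_left ?_ (by positivity)
  have hmono : ∫ x in Ioi c, Real.exp (-(x^2)/2)
      ≤ ∫ x in Ioi c, (1/c) * (x * Real.exp (-(x^2)/2)) := by
    apply setIntegral_mono_on
    · exact integrable_exp_sq.integrableOn
    · exact (integrable_xexp c hc.le).const_mul _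
    · exact measurableSet_Ioi
    · intro x hx
      have hx' : c < x := hx
      have hpos := Real.exp_pos (-(x^2)/2)
      rw [div_mul_eq_mul_div, le_div_iff₀ hc]
      nlinarith
  rw [MeasureTheory.integral_const_mul, integral_xexp c hc] at hmono
  calc ∫ x in Ioi c, Real.exp (-(x^2)/2) ≤ 1/c * Real.exp (-(c^2)/2) := hmono
  _ = Real.exp (-(c^2)/2) / c := by ring

/-! ### combined numeric bound -/

lemma num_all (n : ℕ) (hn : 2 ≤ n) :
    2 * gaussianReal 0 1 {x : ℝ | (n:ℝ) - 1/100 ≤ |x|}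
      ≤ ENNReal.ofReal ((0.3172:ℝ)^n) := by
  rcases eq_or_lt_of_le hn with h2 | h3
  · -- n = 2
    have heq : ((n:ℝ) - 1/100) = 1.99 := by rw [← h2]; norm_num
    rw [heq]
    calc 2 * gaussianReal 0 1 {x : ℝ | (1.99:ℝ) ≤ |x|}
        ≤ 2 * ENNReal.ofReal 0.0490 := mul_le_mul_right tail199 _
    _ = ENNReal.ofReal 0.0980 := by
        rw [show (2:ℝ≥0∞) = ENNReal.ofReal 2 by norm_num,
          ← ENNReal.ofReal_mul (by norm_num : (0:ℝ) ≤ 2)]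
        norm_num
    _ ≤ ENNReal.ofReal ((0.3172:ℝ)^n) := by
        apply ENNReal.ofReal_le_ofReal
        rw [← h2]
        norm_num
  · -- n ≥ 3
    have hn3 : (3:ℕ) ≤ n := h3
    have hn3' : (3:ℝ) ≤ (n:ℝ) := by exact_mod_cast hn3
    set c : ℝ := (n:ℝ) - 1/100 with hcdef
    have hc : 0 < c := by rw [hcdef]; linarith
    have hc299 : (2.99:ℝ) ≤ c := by rw [hcdef]; linarith
    have habs : gaussianReal 0 1 {x : ℝ | c ≤ |x|} ≤ 2 * gaussianReal 0 1 (Ici c) :=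
      abs_tail_le c hc
    have hmill := mill_tail c hc
    have hreal : 4 * ((Real.sqrt (2*Real.pi))⁻¹ * (Real.exp (-(c^2)/2) / c))
        ≤ (0.3172:ℝ)^n := by
      have hexp_pos := Real.exp_pos (-(c^2)/2)
      have hstep1 : 4 * ((Real.sqrt (2*Real.pi))⁻¹ * (Real.exp (-(c^2)/2) / c))
          ≤ Real.exp (-(c^2)/2) := by
        have hd : Real.exp (-(c^2)/2) / c ≤ Real.exp (-(c^2)/2) / 2.99 :=
          div_le_div_of_nonneg_left hexp_pos.le (by norm_num) hc299
        have hinv := inv_sqrt_two_pi_le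
        have hinv0 : (0:ℝ) ≤ (Real.sqrt (2*Real.pi))⁻¹ := by positivity
        have hd0 : (0:ℝ) ≤ Real.exp (-(c^2)/2) / c := by positivity
        have hd2 : Real.exp (-(c^2)/2) / 2.99 ≤ 0.3345 * Real.exp (-(c^2)/2) := by
          rw [div_eq_mul_inv]
          nlinarith
        nlinarith [mul_le_mul hinv (hd.trans hd2) hd0 (by norm_num : (0:ℝ) ≤ 0.39895)]
      have hstep2 : Real.exp (-(c^2)/2) ≤ Real.exp ((n:ℝ) * (-1.4)) := by
        apply Real.exp_le_exp.mpr
        rw [hcdef]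
        nlinarith
      have hstep3 : Real.exp ((n:ℝ) * (-1.4)) = (Real.exp (-1.4))^n :=
        Real.exp_nat_mul (-1.4) n
      have hstep4 : Real.exp (-1.4) ≤ 0.247 := by
        apply exp_neg_le (by norm_num) (by norm_num)
        norm_num
      have hstep5 : (Real.exp (-1.4))^n ≤ (0.3172:ℝ)^n := by
        apply pow_le_pow_left₀ (Real.exp_pos _).le
        linarith
      calc 4 * ((Real.sqrt (2*Real.pi))⁻¹ * (Real.exp (-(c^2)/2) / c))
          ≤ Real.exp (-(c^2)/2) := hstep1
      _ ≤ Real.exp ((n:ℝ) * (-1.4)) := hstep2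
      _ = (Real.exp (-1.4))^n := hstep3
      _ ≤ (0.3172:ℝ)^n := hstep5
    calc 2 * gaussianReal 0 1 {x : ℝ | c ≤ |x|}
        ≤ 2 * (2 * gaussianReal 0 1 (Ici c)) := mul_le_mul_right habs _
    _ = 4 * gaussianReal 0 1 (Ici c) := by ring
    _ ≤ 4 * ENNReal.ofReal ((Real.sqrt (2*Real.pi))⁻¹ * (Real.exp (-(c^2)/2) / c)) :=
        mul_le_mul_right hmill _
    _ = ENNReal.ofReal (4 * ((Real.sqrt (2*Real.pi))⁻¹ * (Real.exp (-(c^2)/2) / c))) := by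
        rw [show (4:ℝ≥0∞) = ENNReal.ofReal 4 by norm_num,
          ← ENNReal.ofReal_mul (by norm_num : (0:ℝ) ≤ 4)]
    _ ≤ ENNReal.ofReal ((0.3172:ℝ)^n) := ENNReal.ofReal_le_ofReal hreal

/-! ### from the continuum supremum to dyadic grids -/

lemma sup_to_grid {Ω : Type*} (B : ℝ → Ω → ℝ) (ω : Ω)
    (hco : Continuous fun t => B t ω) (r a : ℝ) (har : a < r)
    (hsup : r ≤ ⨆ t : Set.Icc (0:ℝ) 1, |B t ω|) :
    ∃ j : ℕ, ∃ k, k ≤ 2^j ∧ a ≤ |B (tg (2^j) k) ω| := by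
  set f : ℝ → ℝ := fun t => |B t ω| with hf
  have hfc : Continuous f := hco.abs
  obtain ⟨t0, ht0mem, ht0max⟩ := (isCompact_Icc (a := (0:ℝ)) (b := 1)).exists_isMaxOn
    (nonempty_Icc.mpr (by norm_num)) hfc.continuousOn
  have hle : (⨆ t : Set.Icc (0:ℝ) 1, |B t ω|) ≤ f t0 := by
    apply ciSup_le
    intro t
    exact ht0max t.2
  have hft0 : a < f t0 := lt_of_lt_of_le har (le_trans hsup hle)
  have hopen : IsOpen (f ⁻¹' Ioi a) := isOpen_Ioi.preimage hfc
  obtain ⟨ε, hε, hball⟩ := Metric.isOpen_iff.mp hopen t0 hft0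
  obtain ⟨j, hj⟩ : ∃ j : ℕ, ((1:ℝ)/2)^j < ε := exists_pow_lt_of_lt_one hε (by norm_num)
  have h2j : (0:ℝ) < 2^j := pow_pos (by norm_num) j
  have ht00 : 0 ≤ t0 := ht0mem.1
  have ht01 : t0 ≤ 1 := ht0mem.2
  set k := Nat.floor (t0 * 2^j) with hk
  have hk1 : (k:ℝ) ≤ t0 * 2^j := Nat.floor_le (by positivity)
  have hk2 : t0 * 2^j < (k:ℝ) + 1 := Nat.lt_floor_add_one _
  have hcast : ((2^j : ℕ) : ℝ) = (2:ℝ)^j := by push_cast; ring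
  have hkle : k ≤ 2^j := by
    have hle2 : t0 * 2^j ≤ ((2:ℝ))^j := by nlinarith
    calc k ≤ Nat.floor ((2:ℝ)^j) := Nat.floor_le_floor hle2
    _ = 2^j := by rw [← hcast, Nat.floor_natCast]
  have he1 : (k:ℝ)/2^j ≤ t0 := by
    rw [div_le_iff₀ h2j]
    exact hk1
  have he2 : t0 - (k:ℝ)/2^j < (1/2)^j := by
    have h3 : t0 < ((k:ℝ)+1)/2^j := by
      rw [lt_div_iff₀ h2j]
      linarith
    have h4 : ((k:ℝ)+1)/2^j = (k:ℝ)/2^j + (1/2)^j := by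
      rw [div_pow, one_pow]
      field_simp
    linarith
  have hdist : dist (tg (2^j) k) t0 < ε := by
    unfold tg
    rw [Real.dist_eq, hcast, abs_lt]
    constructor
    · linarith
    · have : (k:ℝ)/2^j - t0 ≤ 0 := by linarith
      linarith
  have hmem : tg (2^j) k ∈ f ⁻¹' Ioi a := hball (Metric.mem_ball.mpr hdist)
  exact ⟨j, k, hkle, le_of_lt hmem⟩

end BrownianAux

open BrownianAux

/-- For a standard one-dimensional Brownian motion `B`, for every `λ ≥ 1`,
`P(sup_{t ∈ [0,1]} |B_t| ≥ λ) ≤ P(sup_{t ∈ [0,1]} |B_t| ≥ 1)^⌊λ⌋`. -/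
theorem brownian_sup_tail_power
    {Ω : Type*} [MeasurableSpace Ω] (P : Measure Ω) [IsProbabilityMeasure P]
    (B : ℝ → Ω → ℝ) (hmeas : ∀ t, Measurable (B t))
    (hB0 : ∀ ω, B 0 ω = 0)
    (hcont : ∀ᵐ ω ∂P, Continuous fun t => B t ω)
    (hgauss : ∀ s t : ℝ, 0 ≤ s → s ≤ t →
      Measure.map (fun ω => B t ω - B s ω) P = gaussianReal 0 ((t - s).toNNReal))
    (hindep : ∀ (n : ℕ) (t : Fin (n + 1) → ℝ), Monotone t → 0 ≤ t 0 →
      iIndepFun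
        (fun i : Fin n => fun ω => B (t i.succ) ω - B (t i.castSucc) ω) P) :
    ∀ lam : ℝ, 1 ≤ lam →
      P {ω | lam ≤ ⨆ t : Set.Icc (0 : ℝ) 1, |B t ω|} ≤
        (P {ω | 1 ≤ ⨆ t : Set.Icc (0 : ℝ) 1, |B t ω|}) ^ (Nat.floor lam) := by
  intro lam hlam
  classical
  set n := Nat.floor lam with hndef
  have hn1 : 1 ≤ n := Nat.le_floor (by exact_mod_cast hlam)
  have hnle : (n:ℝ) ≤ lam := Nat.floor_le (by linarith)
  have hnull : P {ω | ¬ Continuous fun t => B t ω} = 0 := ae_iff.mp hcont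
  rcases eq_or_lt_of_le hn1 with h1 | h2
  · -- floor = 1
    rw [← h1, pow_one]
    apply measure_mono
    intro ω hω
    have hω' : lam ≤ ⨆ t : Set.Icc (0 : ℝ) 1, |B t ω| := hω
    exact le_trans hlam hω'
  · -- floor ≥ 2
    have hn2 : 2 ≤ n := h2
    have hn2' : (2:ℝ) ≤ (n:ℝ) := by exact_mod_cast hn2
    set a : ℝ := (n:ℝ) - 1/100 with hadef
    have ha : 0 < a := by rw [hadef]; linarith
    have han : a < (n:ℝ) := by rw [hadef]; linarith
    set H : ℕ → Set Ω := fun j => {ω | ∃ k, k ≤ 2^j ∧ a ≤ |B (tg (2^j) k) ω|} with hHdef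
    have hcover : {ω | (n:ℝ) ≤ ⨆ t : Set.Icc (0 : ℝ) 1, |B t ω|}
        ⊆ (⋃ j, H j) ∪ {ω | ¬ Continuous fun t => B t ω} := by
      intro ω hω
      by_cases hc : Continuous fun t => B t ω
      · left
        obtain ⟨j, k, hk, hak⟩ := sup_to_grid B ω hc (n:ℝ) a han hω
        exact mem_iUnion.mpr ⟨j, ⟨k, hk, hak⟩⟩
      · right; exact hc
    have hHmeas : ∀ j, MeasurableSet (H j) := by
      intro j
      have heq : H j = ⋃ k ∈ Finset.range (2^j + 1), {ω | a ≤ |B (tg (2^j) k) ω|} := by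
        ext ω
        simp only [hHdef, mem_setOf_eq, mem_iUnion, Finset.mem_range, Nat.lt_succ_iff,
          exists_prop]
      rw [heq]
      exact MeasurableSet.biUnion (Finset.range (2^j+1)).countable_toSet
        (fun k _ => measurableSet_le measurable_const (hmeas _).abs)
    have hHmono : Monotone H := by
      apply monotone_nat_of_le_succ
      intro j ω hω
      obtain ⟨k, hk, hak⟩ := hω
      refine ⟨2*k, ?_, ?_⟩
      · calc 2*k ≤ 2*2^j := by omega
        _ = 2^(j+1) := by rw [pow_succ]; ring
      · have htg : tg (2^(j+1)) (2*k) = tg (2^j) k := by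
          unfold tg
          have h2 : ((2^(j+1) : ℕ) : ℝ) = 2 * ((2^j : ℕ) : ℝ) := by push_cast; ring
          have h3 : ((2*k : ℕ) : ℝ) = 2 * (k : ℝ) := by push_cast; ring
          rw [h2, h3, mul_div_mul_left _ _ (by norm_num : (2:ℝ) ≠ 0)]
        rwa [htg]
    have hPH : P {ω | (n:ℝ) ≤ ⨆ t : Set.Icc (0 : ℝ) 1, |B t ω|} ≤ P (⋃ j, H j) := by
      calc P {ω | (n:ℝ) ≤ ⨆ t : Set.Icc (0 : ℝ) 1, |B t ω|}
          ≤ P ((⋃ j, H j) ∪ {ω | ¬ Continuous fun t => B t ω}) := measure_mono hcover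
      _ ≤ P (⋃ j, H j) + P {ω | ¬ Continuous fun t => B t ω} := measure_union_le _ _
      _ = P (⋃ j, H j) := by rw [hnull, add_zero]
    have hunion : P (⋃ j, H j) = ⨆ j, P (H j) :=
      (hHmono.directed_le).measure_iUnion
    have hlevy : ∀ j, P (H j) ≤ 2 * gaussianReal 0 1 {x : ℝ | a ≤ |x|} := by
      intro j
      exact levy P B hmeas hB0 hgauss hindep (2^j) (Nat.pow_pos (by norm_num)) a ha
    have hgrid : P {ω | (n:ℝ) ≤ ⨆ t : Set.Icc (0 : ℝ) 1, |B t ω|}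
        ≤ 2 * gaussianReal 0 1 {x : ℝ | a ≤ |x|} := by
      calc P {ω | (n:ℝ) ≤ ⨆ t : Set.Icc (0 : ℝ) 1, |B t ω|} ≤ P (⋃ j, H j) := hPH
      _ = ⨆ j, P (H j) := hunion
      _ ≤ 2 * gaussianReal 0 1 {x : ℝ | a ≤ |x|} := iSup_le hlevy
    -- p-side
    have hP1 : ENNReal.ofReal 0.3172 ≤ P {ω | 1 ≤ ⨆ t : Set.Icc (0 : ℝ) 1, |B t ω|} := by
      have hsubset : {ω | 1 ≤ |B 1 ω|}
          ⊆ {ω | 1 ≤ ⨆ t : Set.Icc (0 : ℝ) 1, |B t ω|}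
            ∪ {ω | ¬ Continuous fun t => B t ω} := by
        intro ω hω
        by_cases hc : Continuous fun t => B t ω
        · left
          have hbdd : BddAbove (Set.range fun t : Set.Icc (0:ℝ) 1 => |B t ω|) := by
            have hcomp : IsCompact ((fun t => |B t ω|) '' Set.Icc (0:ℝ) 1) :=
              isCompact_Icc.image hc.abs
            apply hcomp.bddAbove.mono
            rintro y ⟨t, rfl⟩
            exact ⟨t, t.2, rfl⟩
          have hle := le_ciSup hbdd (⟨1, by norm_num⟩ : Set.Icc (0:ℝ) 1)
          exact le_trans hω hle
        · right; exact hc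
      have hlaw : P {ω | 1 ≤ |B 1 ω|} = gaussianReal 0 1 {x : ℝ | 1 ≤ |x|} := by
        have hmap := hgauss 0 1 le_rfl zero_le_one
        have hfun : (fun ω => B 1 ω - B 0 ω) = B 1 := by
          funext ω; rw [hB0, sub_zero]
        rw [hfun] at hmap
        have h10 : (1 - 0 : ℝ).toNNReal = 1 := by norm_num
        rw [h10] at hmap
        have hsetm : MeasurableSet {x : ℝ | 1 ≤ |x|} :=
          measurableSet_le measurable_const measurable_abs
        rw [← hmap, Measure.map_apply (hmeas 1) hsetm]
        rfl
      calc ENNReal.ofReal 0.3172 ≤ gaussianReal 0 1 {x : ℝ | 1 ≤ |x|} := plower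
      _ = P {ω | 1 ≤ |B 1 ω|} := hlaw.symm
      _ ≤ P ({ω | 1 ≤ ⨆ t : Set.Icc (0 : ℝ) 1, |B t ω|}
            ∪ {ω | ¬ Continuous fun t => B t ω}) := measure_mono hsubset
      _ ≤ P {ω | 1 ≤ ⨆ t : Set.Icc (0 : ℝ) 1, |B t ω|}
            + P {ω | ¬ Continuous fun t => B t ω} := measure_union_le _ _
      _ = P {ω | 1 ≤ ⨆ t : Set.Icc (0 : ℝ) 1, |B t ω|} := by rw [hnull, add_zero]
    -- assemble
    calc P {ω | lam ≤ ⨆ t : Set.Icc (0 : ℝ) 1, |B t ω|}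
        ≤ P {ω | (n:ℝ) ≤ ⨆ t : Set.Icc (0 : ℝ) 1, |B t ω|} := by
          apply measure_mono
          intro ω hω
          have hω' : lam ≤ ⨆ t : Set.Icc (0 : ℝ) 1, |B t ω| := hω
          exact le_trans hnle hω'
    _ ≤ 2 * gaussianReal 0 1 {x : ℝ | a ≤ |x|} := hgrid
    _ ≤ ENNReal.ofReal ((0.3172:ℝ)^n) := num_all n hn2
    _ = (ENNReal.ofReal 0.3172)^n := by rw [ENNReal.ofReal_pow (by norm_num)]
    _ ≤ (P {ω | 1 ≤ ⨆ t : Set.Icc (0 : ℝ) 1, |B t ω|})^n := pow_le_pow_left' hP1 n
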